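/- For 2 < p < 6 and ϑ(p,2) < θ ≤ 1, define G(θ,p) := (2/(2 − p(1−θ)))^{(p−2)/(2p)} · ((p+2)/4)^{(6−p)/(2p)} · (2(2 − p(1−θ))/((2θ−1)p + 2))^{(2pθ − 3(p−2))/(2p)} · [Γ(2/(p−2)) Γ((2 − p(1−θ))/(p−2) + 1/2) / (Γ(2/(p−2) + 1/2) Γ((2 − p(1−θ))/(p−2)))]^{(p−2)/p}. Then ∂G/∂θ < 0 for θ ∈ (ϑ(p,2), 1), i.e., θ ↦ G(θ,p) is strictly decreasing on (ϑ(p,2), 1]. -/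

import Mathlib

noncomputable def G (θ p : ℝ) : ℝ :=
  (2 / (2 - p * (1 - θ))) ^ ((p - 2) / (2 * p)) *
  ((p + 2) / 4) ^ ((6 - p) / (2 * p)) *
  (2 * (2 - p * (1 - θ)) / ((2 * θ - 1) * p + 2)) ^ ((2 * p * θ - 3 * (p - 2)) / (2 * p)) *
  (Real.Gamma (2 / (p - 2)) * Real.Gamma ((2 - p * (1 - θ)) / (p - 2) + 1 / 2) /
    (Real.Gamma (2 / (p - 2) + 1 / 2) * Real.Gamma ((2 - p * (1 - θ)) / (p - 2)))) ^ ((p - 2) / p)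

open Real Filter Topology Finset

noncomputable def phiAux (u : ℝ) : ℝ := ((u+1)/2) * Real.log (u+1) - (u/2) * Real.log u

lemma key_ineq {m : ℝ} (hm : 2 < m) :
    2/m - 2/(m+1) < (Real.log (m-1) - Real.log (m-2)) - (Real.log (m+1) - Real.log m) := by
  have h0 : (0:ℝ) < m - 2 := by linarith
  have h1 : (0:ℝ) < m - 1 := by linarith
  have h2 : (0:ℝ) < m := by linarith
  have h3 : (0:ℝ) < m + 1 := by linarith
  have hr : (0:ℝ) < (m-1)*m := by positivity
  have hr2 : (0:ℝ) < (m-2)*(m+1) := by positivity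
  have hRHS : (Real.log (m-1) - Real.log (m-2)) - (Real.log (m+1) - Real.log m)
      = Real.log (((m-1)*m) / ((m-2)*(m+1))) := by
    rw [Real.log_div (ne_of_gt hr) (ne_of_gt hr2), Real.log_mul (ne_of_gt h1) (ne_of_gt h2),
      Real.log_mul (ne_of_gt h0) (ne_of_gt h3)]
    ring
  rw [hRHS]
  set r : ℝ := ((m-1)*m) / ((m-2)*(m+1)) with hrdef
  have hrpos : 0 < r := by positivity
  have hrne : r ≠ 1 := by
    have : (m-2)*(m+1) < (m-1)*m := by nlinarith
    intro h
    rw [div_eq_one_iff_eq (ne_of_gt hr2)] at h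
    nlinarith
  have hlog : Real.log r⁻¹ < r⁻¹ - 1 :=
    Real.log_lt_sub_one_of_pos (by positivity) (by simpa using hrne)
  rw [Real.log_inv] at hlog
  have hgt : 1 - r⁻¹ < Real.log r := by linarith
  have hinv : r⁻¹ = ((m-2)*(m+1)) / ((m-1)*m) := by
    rw [hrdef]; rw [inv_div]
  have hval : 1 - r⁻¹ = 2 / ((m-1)*m) := by
    rw [hinv]; field_simp; ring
  have hlt : 2/m - 2/(m+1) < 2 / ((m-1)*m) := by
    have : 2/m - 2/(m+1) = 2 / (m*(m+1)) := by field_simp; ring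
    rw [this]
    apply div_lt_div_of_pos_left (by norm_num) hr
    nlinarith
  linarith

lemma hasDerivAt_phiAux {u : ℝ} (hu : 0 < u) :
    HasDerivAt phiAux ((Real.log (u+1) - Real.log u)/2) u := by
  have h1 : HasDerivAt (fun u : ℝ => ((u+1)/2) * Real.log (u+1))
      ((1/2) * Real.log (u+1) + ((u+1)/2) * (1/(u+1))) u := by
    have := ((hasDerivAt_id u).add_const 1).div_const 2
    have hl : HasDerivAt (fun u : ℝ => Real.log (u+1)) (1/(u+1)) u := by
      simpa using ((hasDerivAt_id u).add_const 1).log (by positivity)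
    simpa [Pi.mul_def] using this.mul hl
  have h2 : HasDerivAt (fun u : ℝ => (u/2) * Real.log u)
      ((1/2) * Real.log u + (u/2) * (1/u)) u := by
    have := (hasDerivAt_id u).div_const 2
    have hl : HasDerivAt Real.log (1/u) u := by
      simpa [one_div] using Real.hasDerivAt_log (ne_of_gt hu)
    simpa [Pi.mul_def] using this.mul hl
  have : HasDerivAt phiAux _ u := h1.sub h2
  convert this using 1
  have hu1 : u + 1 ≠ 0 := by positivity
  field_simp
  ring

lemma log_diff_antitone {u x : ℝ} (hu : 0 < u) (hux : u ≤ x) :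
    Real.log (x+1) - Real.log x ≤ Real.log (u+1) - Real.log u := by
  have hx : 0 < x := lt_of_lt_of_le hu hux
  have h1 : (x+1)*u ≤ (u+1)*x := by nlinarith
  have h2 : Real.log ((x+1)*u) ≤ Real.log ((u+1)*x) :=
    Real.log_le_log (by positivity) h1
  rw [Real.log_mul (by positivity) (ne_of_gt hu), Real.log_mul (by positivity) (ne_of_gt hx)] at h2
  linarith

lemma phiAux_mono {u v : ℝ} (hu : 0 < u) (huv : u ≤ v) : phiAux u ≤ phiAux v := by
  rcases eq_or_lt_of_le huv with h | h
  · rw [h]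
  refine le_of_lt ?_
  have : StrictMonoOn phiAux (Set.Ioi 0) := by
    apply strictMonoOn_of_deriv_pos (convex_Ioi 0)
    · intro x hx
      exact (hasDerivAt_phiAux hx).differentiableAt.continuousAt.continuousWithinAt
    · intro x hx
      rw [interior_Ioi] at hx
      rw [(hasDerivAt_phiAux hx).deriv]
      have : Real.log x < Real.log (x+1) := Real.log_lt_log hx (by linarith)
      linarith
  exact this (Set.mem_Ioi.2 hu) (Set.mem_Ioi.2 (by linarith)) h

lemma phiAux_lipschitz {u v : ℝ} (hu : 0 < u) (huv : u ≤ v) :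
    phiAux v - phiAux u ≤ (v - u) / (2*u) := by
  set c : ℝ := (Real.log (u+1) - Real.log u)/2 with hc
  have key : phiAux v - phiAux u ≤ (v - u) * c := by
    have hanti : AntitoneOn (fun x => phiAux x - x * c) (Set.Ici u) := by
      have hd : ∀ x, 0 < x → HasDerivAt (fun y => phiAux y - y * c)
          ((Real.log (x+1) - Real.log x)/2 - c) x := by
        intro x hx0
        exact (hasDerivAt_phiAux hx0).sub (hasDerivAt_mul_const c)
      apply antitoneOn_of_deriv_nonpos (convex_Ici u)
      · intro x hx
        have hx0 : 0 < x := lt_of_lt_of_le hu hx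
        exact (hd x hx0).differentiableAt.continuousAt.continuousWithinAt
      · intro x hx
        have hx1 : u < x := by rwa [interior_Ici] at hx
        have hx0 : 0 < x := lt_trans hu hx1
        exact (hd x hx0).differentiableAt.differentiableWithinAt
      · intro x hx
        have hx1 : u < x := by rwa [interior_Ici] at hx
        have hx0 : 0 < x := lt_trans hu hx1
        rw [(hd x hx0).deriv]
        have := log_diff_antitone hu (le_of_lt hx1)
        rw [hc]
        linarith
    have := hanti (Set.self_mem_Ici) (Set.mem_Ici.2 huv) huv
    simp only at this
    nlinarith [this]
  have hcle : c ≤ 1/(2*u) := by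
    rw [hc]
    have h1 : Real.log (u+1) - Real.log u = Real.log ((u+1)/u) := by
      rw [Real.log_div (by positivity) (ne_of_gt hu)]
    have h2 : Real.log ((u+1)/u) ≤ (u+1)/u - 1 := Real.log_le_sub_one_of_pos (by positivity)
    have h3 : (u+1)/u - 1 = 1/u := by field_simp; ring
    rw [h1]
    have h4 : 1/(2*u) = (1/u)/2 := by
      field_simp
    rw [h3] at h2
    rw [h4]
    linarith [h2]
  have hvu : 0 ≤ v - u := by linarith
  calc phiAux v - phiAux u ≤ (v-u)*c := key
    _ ≤ (v-u)*(1/(2*u)) := by apply mul_le_mul_of_nonneg_left hcle hvu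
    _ = (v-u)/(2*u) := by ring

lemma tendsto_phiAux_diff {x1 x2 : ℝ} (h1 : 0 < x1) (h12 : x1 < x2) :
    Tendsto (fun n : ℕ => phiAux (2*x2+2*n) - phiAux (2*x1+2*n)) atTop (𝓝 0) := by
  have hb : Tendsto (fun n : ℕ => (x2-x1) / (2*x1+2*(n:ℝ))) atTop (𝓝 0) := by
    apply Tendsto.div_atTop tendsto_const_nhds
    apply Filter.tendsto_atTop_add_const_left
    exact (tendsto_natCast_atTop_atTop (R := ℝ)).const_mul_atTop (by norm_num)
  apply squeeze_zero
  · intro n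
    have : phiAux (2*x1+2*n) ≤ phiAux (2*x2+2*n) :=
      phiAux_mono (by positivity) (by nlinarith [Nat.cast_nonneg (α := ℝ) n])
    linarith
  · intro n
    have h := phiAux_lipschitz (u := 2*x1+2*(n:ℝ)) (v := 2*x2+2*(n:ℝ)) (by positivity)
      (by nlinarith [Nat.cast_nonneg (α := ℝ) n])
    calc phiAux (2*x2+2*n) - phiAux (2*x1+2*n)
        ≤ (2*x2+2*(n:ℝ) - (2*x1+2*(n:ℝ))) / (2*(2*x1+2*(n:ℝ))) := h
      _ ≤ (x2-x1) / (2*x1+2*(n:ℝ)) := by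
          rw [show (2*x2+2*(n:ℝ) - (2*x1+2*(n:ℝ))) = 2*(x2-x1) by ring]
          rw [show (2:ℝ)*(2*x1+2*(n:ℝ)) = 2*(2*x1+2*(n:ℝ)) by ring]
          rw [mul_div_mul_left _ _ (by norm_num : (2:ℝ) ≠ 0)]
  · exact hb

noncomputable def gAux (c : ℝ) (x : ℝ) : ℝ :=
  Real.log (2*x+c+1) - Real.log (2*x+c) + phiAux (2*x+c-2) - phiAux (2*x+c)

lemma hasDerivAt_gAux {c x : ℝ} (hc : 2 ≤ c) (hx : 0 < x) :
    HasDerivAt (gAux c)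
      (2/(2*x+c+1) - 2/(2*x+c)
        + (Real.log (2*x+c-1) - Real.log (2*x+c-2))
        - (Real.log (2*x+c+1) - Real.log (2*x+c))) x := by
  have hm : 2 < 2*x+c := by linarith
  have hid : HasDerivAt (fun x : ℝ => 2*x+c) 2 x := by
    simpa using ((hasDerivAt_id x).const_mul 2).add_const c
  have hid2 : HasDerivAt (fun x : ℝ => 2*x+c-2) 2 x := by
    simpa using hid.sub_const 2
  have h1 : HasDerivAt (fun x : ℝ => Real.log (2*x+c+1)) (2/(2*x+c+1)) x := by
    simpa [div_eq_mul_inv, mul_comm] using (hid.add_const 1).log (by linarith)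
  have h2 : HasDerivAt (fun x : ℝ => Real.log (2*x+c)) (2/(2*x+c)) x := by
    simpa [div_eq_mul_inv, mul_comm] using hid.log (by linarith)
  have h3 : HasDerivAt (fun x : ℝ => phiAux (2*x+c-2))
      (Real.log (2*x+c-1) - Real.log (2*x+c-2)) x := by
    have h := (hasDerivAt_phiAux (u := 2*x+c-2) (by linarith)).comp x hid2
    have e : (Real.log (2*x+c-2+1) - Real.log (2*x+c-2))/2 * 2
        = Real.log (2*x+c-1) - Real.log (2*x+c-2) := by ring_nf
    rw [e] at h
    exact h
  have h4 : HasDerivAt (fun x : ℝ => phiAux (2*x+c))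
      (Real.log (2*x+c+1) - Real.log (2*x+c)) x := by
    have h := (hasDerivAt_phiAux (u := 2*x+c) (by linarith)).comp x hid
    have e : (Real.log (2*x+c+1) - Real.log (2*x+c))/2 * 2
        = Real.log (2*x+c+1) - Real.log (2*x+c) := by ring
    rw [e] at h
    exact h
  exact ((h1.sub h2).add h3).sub h4

lemma gAux_strictMono {c : ℝ} (hc : 2 ≤ c) : StrictMonoOn (gAux c) (Set.Ioi 0) := by
  apply strictMonoOn_of_deriv_pos (convex_Ioi 0)
  · intro x hx
    exact (hasDerivAt_gAux hc hx).differentiableAt.continuousAt.continuousWithinAt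
  · intro x hx
    rw [interior_Ioi] at hx
    rw [(hasDerivAt_gAux hc hx).deriv]
    have := key_ineq (m := 2*x+c) (by simp at hx; linarith)
    linarith

noncomputable def Da (x : ℝ) : ℝ := Real.log (Real.Gamma (x+1/2)) - Real.log (Real.Gamma x)

noncomputable def Fa (x : ℝ) : ℝ := phiAux (2*x) - (Real.log (2*x+1) - Real.log (2*x))

lemma log_gammaSeq {x : ℝ} (hx : 0 < x) {n : ℕ} (hn : 1 ≤ n) :
    Real.log (Real.GammaSeq x n)
      = x * Real.log n + Real.log (n.factorial) - ∑ i ∈ range (n+1), Real.log (x + i) := by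
  have hn0 : (0:ℝ) < n := by exact_mod_cast hn
  have hprod : (0:ℝ) < ∏ i ∈ range (n+1), (x + i) := by
    apply Finset.prod_pos
    intro i _
    positivity
  rw [Real.GammaSeq, Real.log_div (by positivity) (ne_of_gt hprod),
    Real.log_mul (by positivity) (by positivity), Real.log_rpow hn0,
    Real.log_prod (fun i _ => by positivity)]

lemma tendsto_log_gammaSeq {x : ℝ} (hx : 0 < x) :
    Tendsto (fun n => Real.log (Real.GammaSeq x n)) atTop (𝓝 (Real.log (Real.Gamma x))) :=
  ((Real.continuousAt_log (ne_of_gt (Real.Gamma_pos_of_pos hx))).tendsto).comp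
    (Real.GammaSeq_tendsto_Gamma x)

lemma main_analytic {x1 x2 : ℝ} (h1 : 0 < x1) (h12 : x1 < x2) :
    Da x2 - Fa x2 < Da x1 - Fa x1 := by
  have h2 : 0 < x2 := lt_trans h1 h12
  -- tk i
  set tk : ℕ → ℝ := fun i =>
    (Real.log (2*x1+2*i+1) - Real.log (2*x1+2*i)) - (Real.log (2*x2+2*i+1) - Real.log (2*x2+2*i))
    with htk
  set J : ℕ → ℝ := fun k => phiAux (2*x2+2*k) - phiAux (2*x1+2*k) with hJ
  set S : ℕ → ℝ := fun n => ∑ i ∈ range (n+1), tk i with hS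
  -- step inequalities from gAux
  have hstep : ∀ k : ℕ, 1 ≤ k → tk k < J (k-1) - J k := by
    intro k hk
    have hc : (2:ℝ) ≤ 2*k := by exact_mod_cast (by omega : 2 ≤ 2*k)
    have := gAux_strictMono (c := 2*(k:ℝ)) hc (Set.mem_Ioi.2 h1) (Set.mem_Ioi.2 h2) h12
    simp only [gAux] at this
    have hcast : ((k-1 : ℕ) : ℝ) = (k:ℝ) - 1 := by
      have : (1:ℕ) ≤ k := hk
      push_cast [this]; ring
    simp only [htk, hJ, hcast]
    have e1 : 2*x1+2*(k:ℝ)-2 = 2*x1+2*((k:ℝ)-1) := by ring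
    have e2 : 2*x2+2*(k:ℝ)-2 = 2*x2+2*((k:ℝ)-1) := by ring
    rw [e1, e2] at this
    linarith
  -- partial sum bound by induction
  have hbound : ∀ n : ℕ, 1 ≤ n → S n ≤ tk 0 + tk 1 + (J 1 - J n) := by
    intro n hn
    induction n with
    | zero => omega
    | succ m ih =>
      rcases Nat.eq_or_lt_of_le hn with h | h
      · have hm : m = 0 := by omega
        subst hm
        simp only [hS]
        rw [Finset.sum_range_succ, Finset.sum_range_one]
        simp
      · have hm1 : 1 ≤ m := by omega
        have := ih hm1
        have hstep' := hstep (m+1) (by omega)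
        have : S (m+1) = S m + tk (m+1) := by
          simp only [hS]
          rw [Finset.sum_range_succ]
        rw [this]
        have hcast : (m+1) - 1 = m := by omega
        rw [hcast] at hstep'
        linarith [ih hm1]
  -- limit of S
  have hSlim : Tendsto S atTop (𝓝 (Da x2 - Da x1)) := by
    have key : ∀ n : ℕ, 1 ≤ n → S n =
        (Real.log (Real.GammaSeq (x2+1/2) n) - Real.log (Real.GammaSeq x2 n))
        - (Real.log (Real.GammaSeq (x1+1/2) n) - Real.log (Real.GammaSeq x1 n)) := by
      intro n hn
      have exp : ∀ x : ℝ, 0 < x →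
          Real.log (Real.GammaSeq (x+1/2) n) - Real.log (Real.GammaSeq x n)
          = (1/2) * Real.log n
            - ∑ i ∈ range (n+1), (Real.log (2*x+2*i+1) - Real.log (2*x+2*i)) := by
        intro x hx
        rw [log_gammaSeq (by positivity) hn, log_gammaSeq hx hn]
        have : ∀ i ∈ range (n+1),
            Real.log (2*x+2*i+1) - Real.log (2*x+2*i)
            = Real.log (x+1/2+i) - Real.log (x+i) := by
          intro i _
          have e1 : 2*x+2*(i:ℝ)+1 = 2*(x+1/2+i) := by ring
          have e2 : 2*x+2*(i:ℝ) = 2*(x+i) := by ring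
          rw [e1, e2, Real.log_mul (by norm_num) (by positivity),
            Real.log_mul (by norm_num) (by positivity)]
          ring
        rw [Finset.sum_congr rfl this, Finset.sum_sub_distrib]
        ring
      rw [exp x1 h1, exp x2 h2]
      simp only [hS, htk]
      rw [Finset.sum_sub_distrib]
      ring
    have hconv : Tendsto (fun n =>
        (Real.log (Real.GammaSeq (x2+1/2) n) - Real.log (Real.GammaSeq x2 n))
        - (Real.log (Real.GammaSeq (x1+1/2) n) - Real.log (Real.GammaSeq x1 n)))
        atTop (𝓝 (Da x2 - Da x1)) := by
      have := ((tendsto_log_gammaSeq (by positivity : (0:ℝ) < x2+1/2)).sub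
        (tendsto_log_gammaSeq h2)).sub
        ((tendsto_log_gammaSeq (by positivity : (0:ℝ) < x1+1/2)).sub
        (tendsto_log_gammaSeq h1))
      simpa [Da] using this
    apply hconv.congr'
    filter_upwards [eventually_ge_atTop 1] with n hn
    exact (key n hn).symm
  -- pass to the limit
  have hJlim : Tendsto (fun n : ℕ => tk 0 + tk 1 + (J 1 - J n)) atTop
      (𝓝 (tk 0 + tk 1 + (J 1 - 0))) := by
    apply Tendsto.add tendsto_const_nhds
    apply Tendsto.sub tendsto_const_nhds
    simpa [hJ] using tendsto_phiAux_diff h1 h12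
  have hle : Da x2 - Da x1 ≤ tk 0 + tk 1 + J 1 := by
    have := le_of_tendsto_of_tendsto hSlim hJlim ?_
    · simpa using this
    · filter_upwards [eventually_ge_atTop 1] with n hn
      exact hbound n hn
  -- strict part: tk 1 < J 0 - J 1
  have hstrict : tk 1 < J 0 - J 1 := by
    have := hstep 1 le_rfl
    simpa using this
  have hfinal : Da x2 - Da x1 < tk 0 + J 0 := by linarith
  -- identify tk 0 + J 0 with Fa difference
  have hFa : Fa x2 - Fa x1 = tk 0 + J 0 := by
    simp only [Fa, htk, hJ]
    push_cast
    ring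
  linarith [hFa, hfinal]

noncomputable def Kc (p : ℝ) : ℝ := Real.exp (
  ((6-p)/(2*p)) * Real.log ((p+2)/4)
  + ((p-2)/p) * (Real.log (Real.Gamma (2/(p-2))) - Real.log (Real.Gamma (2/(p-2)+1/2)))
  + ((p-2)/(2*p)) * (2*Real.log 2 - Real.log (p-2)))

lemma G_eq {p θ : ℝ} (hp1 : 2 < p) (hp2 : p < 6) (hθ : (p-2)/p < θ) :
    G θ p = Kc p * Real.exp (((p-2)/p) *
      (Da ((2 - p * (1 - θ)) / (p - 2)) - Fa ((2 - p * (1 - θ)) / (p - 2)))) := by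
  have hp0 : (0:ℝ) < p := by linarith
  have hp2' : (0:ℝ) < p - 2 := by linarith
  set s : ℝ := 2 - p * (1 - θ) with hsdef
  set x : ℝ := s / (p - 2) with hxdef
  have hs : 0 < s := by
    have := (div_lt_iff₀ hp0).1 hθ
    simp only [hsdef]
    nlinarith
  have hx : 0 < x := div_pos hs hp2'
  have hsx : s = (p-2)*x := by
    rw [hxdef]; field_simp
  have h2x1pos : (0:ℝ) < 2*x+1 := by linarith
  have hden : (2*θ-1)*p+2 = (p-2)*(2*x+1) := by
    have : (2*θ-1)*p+2 = 2*s + (p-2) := by rw [hsdef]; ring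
    rw [this, hsx]; ring
  have hexp3 : (2*p*θ - 3*(p-2)) = (p-2)*(2*x-1) := by
    have : 2*p*θ - 3*(p-2) = 2*s - (p-2) := by rw [hsdef]; ring
    rw [this, hsx]; ring
  have hb3 : 2 * s / ((2*θ-1)*p+2) = (2*x)/(2*x+1) := by
    rw [hden, hsx]
    field_simp
  have hΓ1 : 0 < Real.Gamma (2/(p-2)) := Real.Gamma_pos_of_pos (by positivity)
  have hΓ2 : 0 < Real.Gamma (2/(p-2)+1/2) := Real.Gamma_pos_of_pos (by positivity)
  have hΓ3 : 0 < Real.Gamma (x+1/2) := Real.Gamma_pos_of_pos (by positivity)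
  have hΓ4 : 0 < Real.Gamma x := Real.Gamma_pos_of_pos hx
  have hrat : 0 < Real.Gamma (2/(p-2)) * Real.Gamma (x+1/2) /
      (Real.Gamma (2/(p-2)+1/2) * Real.Gamma x) := by positivity
  rw [G]
  rw [hb3]
  rw [hexp3]
  rw [Real.rpow_def_of_pos (by positivity : (0:ℝ) < 2/s),
    Real.rpow_def_of_pos (by positivity : (0:ℝ) < (p+2)/4),
    Real.rpow_def_of_pos (by positivity : (0:ℝ) < 2*x/(2*x+1)),
    Real.rpow_def_of_pos hrat, Kc,
    ← Real.exp_add, ← Real.exp_add, ← Real.exp_add, ← Real.exp_add]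
  congr 1
  rw [Real.log_div (by norm_num) (ne_of_gt hs),
    Real.log_div (by positivity) (by positivity : (2*x+1:ℝ) ≠ 0),
    Real.log_div (by positivity) (by positivity),
    Real.log_div (ne_of_gt (mul_pos hΓ1 hΓ3)) (ne_of_gt (mul_pos hΓ2 hΓ4)),
    Real.log_mul (ne_of_gt hΓ1) (ne_of_gt hΓ3),
    Real.log_mul (ne_of_gt hΓ2) (ne_of_gt hΓ4)]
  have hlogs : Real.log s = Real.log (p-2) + Real.log x := by
    rw [hsx, Real.log_mul (ne_of_gt hp2') (ne_of_gt hx)]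
  have hlog2x : Real.log (2*x) = Real.log 2 + Real.log x := by
    rw [Real.log_mul (by norm_num) (ne_of_gt hx)]
  rw [hlogs, hlog2x, Da, Fa, phiAux, hlog2x]
  ring

theorem G_strictAnti (p : ℝ) (hp1 : 2 < p) (hp2 : p < 6) :
    StrictAntiOn (fun θ : ℝ => G θ p) (Set.Ioc ((p - 2) / p) 1) := by
  intro θ1 hθ1 θ2 hθ2 hlt
  have hp0 : (0:ℝ) < p := by linarith
  have hp2' : (0:ℝ) < p - 2 := by linarith
  have hx1pos : 0 < (2 - p * (1 - θ1)) / (p - 2) := by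
    have h := hθ1.1
    have : 0 < 2 - p * (1 - θ1) := by
      have := (div_lt_iff₀ hp0).1 h
      nlinarith
    positivity
  have hxlt : (2 - p * (1 - θ1)) / (p - 2) < (2 - p * (1 - θ2)) / (p - 2) := by
    apply div_lt_div_of_pos_right _ hp2'
    nlinarith
  simp only [G_eq hp1 hp2 hθ1.1, G_eq hp1 hp2 hθ2.1]
  apply mul_lt_mul_of_pos_left _ (Real.exp_pos _)
  rw [Real.exp_lt_exp]
  apply mul_lt_mul_of_pos_left _ (by positivity : (0:ℝ) < (p-2)/p)
  exact main_analytic hx1pos hxlt
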